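/- arXiv:0712.0522 — 6 statements merged into one kernel-verified Lean document; each statement's English description precedes it below -/
import Mathlib

section
/- Let R > 1, r = 1/R, and φ ∈ ℝ. Then (R² − r²)/(2π) · ∫_0^{2π} 1/((R² + r² − R − r) + ((R + r + 2)/4)(2 − 2cos(θ − φ))) dθ = √((R² + 2R + 1)/(R² + R + 1)). -/
open Real

lemma key_integral (a b : ℝ) (hb : 0 < b) (hab : b < a) :
    ∫ θ in (0:ℝ)..(2*π), 1/(a - b * Real.cos θ) = 2*π / Real.sqrt (a^2 - b^2) := by
  have ha : 0 < a := hb.trans hab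
  set k := Real.sqrt (a^2 - b^2) with hkdef
  have hk2 : k^2 = a^2 - b^2 := Real.sq_sqrt (by nlinarith)
  have hkpos : 0 < k := Real.sqrt_pos.2 (by nlinarith)
  have hka : k < a := by nlinarith
  have hD : ∀ θ : ℝ, 0 < a + k - b * Real.cos θ := by
    intro θ
    nlinarith [Real.cos_le_one θ, Real.neg_one_le_cos θ]
  have hden : ∀ θ : ℝ, 0 < a - b * Real.cos θ := by
    intro θ
    nlinarith [Real.cos_le_one θ]
  set F : ℝ → ℝ := fun θ => (θ + 2 * Real.arctan (b * Real.sin θ / (a + k - b * Real.cos θ))) / k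
    with hF
  have hderiv : ∀ θ : ℝ, HasDerivAt F (1 / (a - b * Real.cos θ)) θ := by
    intro θ
    have h1 : HasDerivAt (fun θ : ℝ => b * Real.sin θ) (b * Real.cos θ) θ :=
      (Real.hasDerivAt_sin θ).const_mul b
    have h2 : HasDerivAt (fun θ : ℝ => a + k - b * Real.cos θ) (b * Real.sin θ) θ := by
      have := ((Real.hasDerivAt_cos θ).const_mul b).const_sub (a + k)
      simpa using this.congr_deriv (by ring)
    have hu := h1.div h2 (ne_of_gt (hD θ))
    have harc := hu.arctan
    have hall := ((hasDerivAt_id θ).add (harc.const_mul 2)).div_const k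
    convert hall using 1 <;> try rfl
    have hDne : a + k - b * Real.cos θ ≠ 0 := ne_of_gt (hD θ)
    have hdne : a - b * Real.cos θ ≠ 0 := ne_of_gt (hden θ)
    have hkne : k ≠ 0 := ne_of_gt hkpos
    have hsum : (a + k - b * Real.cos θ)^2 + (b * Real.sin θ)^2
        = 2 * (a + k) * (a - b * Real.cos θ) := by
      have hs := Real.sin_sq_add_cos_sq θ
      nlinarith [hs, hk2]
    have h1u : 1 + (b * Real.sin θ / (a + k - b * Real.cos θ))^2
        = 2 * (a + k) * (a - b * Real.cos θ) / (a + k - b * Real.cos θ)^2 := by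
      field_simp
      linarith [hsum]
    rw [Pi.div_apply, h1u]
    have hakpos : 0 < a + k := by linarith
    have hs := Real.sin_sq_add_cos_sq θ
    field_simp
    linear_combination hk2 + b^2 * hs
  have hcont : Continuous fun θ : ℝ => 1 / (a - b * Real.cos θ) := by
    apply continuous_const.div (by continuity)
    exact fun θ => ne_of_gt (hden θ)
  have hint := intervalIntegral.integral_eq_sub_of_hasDerivAt
    (fun θ _ => hderiv θ) (hcont.intervalIntegrable 0 (2*π))
  rw [hint]
  simp only [hF, Real.sin_two_pi, Real.sin_zero, zero_mul, mul_zero, zero_div,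
    Real.arctan_zero, mul_zero, add_zero, zero_add]
  ring

theorem stmt_3 (R : ℝ) (hR : 1 < R) (r : ℝ) (hr : r = 1 / R) (φ : ℝ) :
    (R ^ 2 - r ^ 2) / (2 * π) *
      ∫ θ in (0 : ℝ)..(2 * π),
        1 / ((R ^ 2 + r ^ 2 - R - r) + ((R + r + 2) / 4) * (2 - 2 * Real.cos (θ - φ))) =
      Real.sqrt ((R ^ 2 + 2 * R + 1) / (R ^ 2 + R + 1)) := by
  have hR0 : (0:ℝ) < R := by linarith
  have hRne : R ≠ 0 := ne_of_gt hR0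
  have hrpos : 0 < r := by rw [hr]; positivity
  have hrR : r * R = 1 := by rw [hr]; field_simp
  have hr1 : r < 1 := by
    rw [hr]; rw [div_lt_one hR0]; exact hR
  set a : ℝ := R ^ 2 + r ^ 2 - R - r + (R + r + 2) / 2 with hadef
  set b : ℝ := (R + r + 2) / 2 with hbdef
  have hb : 0 < b := by rw [hbdef]; linarith
  have hab : b < a := by
    rw [hadef, hbdef]
    nlinarith [sq_nonneg (R - 1), sq_nonneg (r - 1), sq_nonneg (R + r), hrR]
  have hrw : (∫ θ in (0 : ℝ)..(2 * π),
      1 / ((R ^ 2 + r ^ 2 - R - r) + ((R + r + 2) / 4) * (2 - 2 * Real.cos (θ - φ))))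
      = ∫ θ in (0 : ℝ)..(2 * π), 1 / (a - b * Real.cos (θ - φ)) := by
    apply intervalIntegral.integral_congr
    intro θ _
    rw [hadef, hbdef]; ring_nf
  rw [hrw]
  have hshift : (∫ θ in (0 : ℝ)..(2 * π), 1 / (a - b * Real.cos (θ - φ)))
      = ∫ θ in (0 : ℝ)..(2 * π), 1 / (a - b * Real.cos θ) := by
    have h1 := intervalIntegral.integral_comp_sub_right
      (fun θ => 1 / (a - b * Real.cos θ)) φ (a := 0) (b := 2 * π)
    rw [h1]
    have hper : Function.Periodic (fun θ : ℝ => 1 / (a - b * Real.cos θ)) (2 * π) := by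
      intro θ; simp [Real.cos_add_two_pi]
    have h2 := hper.intervalIntegral_add_eq (-φ) 0
    rw [zero_add] at h2
    rw [show (0:ℝ) - φ = -φ by ring, show 2*π - φ = -φ + 2*π by ring]
    exact h2
  rw [hshift, key_integral a b hb hab]
  have hamb : 0 < a - b := by linarith
  have hapb : 0 < a + b := by linarith
  have hab2 : 0 < a^2 - b^2 := by nlinarith
  have hkpos : 0 < Real.sqrt (a^2-b^2) := Real.sqrt_pos.2 hab2
  have hnum : (0:ℝ) < R^2 - r^2 := by nlinarith
  have step1 : (R^2 - r^2)/(2*π) * (2*π/Real.sqrt (a^2-b^2))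
      = (R^2-r^2)/Real.sqrt (a^2-b^2) := by
    field_simp
  rw [step1]
  rw [show (R^2-r^2) = Real.sqrt ((R^2-r^2)^2) from (Real.sqrt_sq hnum.le).symm]
  rw [← Real.sqrt_div (sq_nonneg _)]
  congr 1
  rw [div_eq_div_iff hab2.ne' (by positivity : (0:ℝ) < R^2+R+1).ne']
  rw [hadef, hbdef]
  subst hr
  field_simp
  ring
end

section
/- Let H be a complex Hilbert space, A a bounded operator on H, R > 0 with ‖A‖ < R, and set r = 1/R. For every θ ∈ ℝ, the self-adjoint operator μ(θ,A) := (1/(4π))·((1 + e^{−iθ}rA)(1 − e^{−iθ}rA)⁻¹ + (1 + e^{iθ}rA*)(1 − e^{iθ}rA*)⁻¹) is positive semidefinite. -/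
open Complex

/-- The operator-valued density `μ(θ, A)` from the decomposition lemma. -/
noncomputable def muOp {H : Type*} [NormedAddCommGroup H] [InnerProductSpace ℂ H]
    [CompleteSpace H] (r θ : ℝ) (A : H →L[ℂ] H) : H →L[ℂ] H :=
  (((4 * Real.pi : ℝ) : ℂ))⁻¹ •
    ((1 + Complex.exp (-(θ : ℂ) * Complex.I) • (r : ℂ) • A) *
        Ring.inverse (1 - Complex.exp (-(θ : ℂ) * Complex.I) • (r : ℂ) • A) +
      (1 + Complex.exp ((θ : ℂ) * Complex.I) • (r : ℂ) • ContinuousLinearMap.adjoint A) *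
        Ring.inverse
          (1 - Complex.exp ((θ : ℂ) * Complex.I) • (r : ℂ) • ContinuousLinearMap.adjoint A))

section Aux

variable {H : Type*} [NormedAddCommGroup H] [InnerProductSpace ℂ H] [CompleteSpace H]

/-- For `‖B‖ < 1`, `(1+B)(1-B)⁻¹ + ((1+B)(1-B)⁻¹)^*` is positive. -/
lemma aux_pos (B : H →L[ℂ] H) (hB : ‖B‖ < 1) (c : ℝ) (hc : 0 ≤ c)
    (T : H →L[ℂ] H) (hT : T = (1 + B) * Ring.inverse (1 - B)) :
    (((c : ℂ)) • (T + star T)).IsPositive := by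
  rw [ContinuousLinearMap.isPositive_def']
  constructor
  · -- self-adjointness
    rw [IsSelfAdjoint, star_smul, star_add, star_star]
    simp [Complex.conj_ofReal, add_comm]
  · intro x
    have hself : ∀ z : H, (0:ℝ) ≤ RCLike.re (inner ℂ (T z) z : ℂ) + RCLike.re (inner ℂ ((star T) z) z : ℂ) := by
      intro z
      have h2 : RCLike.re (inner ℂ ((star T) z) z : ℂ) = RCLike.re (inner ℂ (T z) z : ℂ) := by
        rw [ContinuousLinearMap.star_eq_adjoint, ContinuousLinearMap.adjoint_inner_left]
        exact inner_re_symm _ _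
      rw [h2]
      set u : (H →L[ℂ] H)ˣ := Units.oneSub B hB with hu
      set y : H := (↑u⁻¹ : H →L[ℂ] H) z with hy
      have hz : z = (1 - B) y := by
        have : ((↑u * ↑u⁻¹ : H →L[ℂ] H)) z = z := by rw [u.mul_inv]; rfl
        calc z = (↑u : H →L[ℂ] H) ((↑u⁻¹ : H →L[ℂ] H) z) := this.symm
        _ = (1 - B) y := by rw [hy]; rfl
      have hTz : T z = (1 + B) y := by
        rw [hT, NormedRing.inverse_one_sub B hB]
        rfl
      have key : RCLike.re (inner ℂ (T z) z : ℂ) = ‖y‖ ^ 2 - ‖B y‖ ^ 2 := by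
        rw [hTz, hz]
        have : (1 + B) y = y + B y := rfl
        rw [this]
        have h2 : (1 - B) y = y - B y := rfl
        rw [h2, inner_sub_right, inner_add_left, inner_add_left, map_sub, map_add, map_add]
        have e1 : RCLike.re (inner ℂ y y : ℂ) = ‖y‖ ^ 2 := by
          rw [← inner_self_eq_norm_sq (𝕜 := ℂ)]
        have e2 : RCLike.re (inner ℂ (B y) (B y) : ℂ) = ‖B y‖ ^ 2 := by
          rw [← inner_self_eq_norm_sq (𝕜 := ℂ)]
        have e3 : RCLike.re (inner ℂ (B y) y : ℂ) = RCLike.re (inner ℂ y (B y) : ℂ) :=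
          inner_re_symm _ _
        rw [e1, e2, e3]
        ring
      rw [key]
      have hBy : ‖B y‖ ≤ ‖y‖ := by
        calc ‖B y‖ ≤ ‖B‖ * ‖y‖ := B.le_opNorm y
        _ ≤ 1 * ‖y‖ := by
            apply mul_le_mul_of_nonneg_right (le_of_lt hB) (norm_nonneg _)
        _ = ‖y‖ := one_mul _
      nlinarith [norm_nonneg (B y), norm_nonneg y]
    have := hself x
    rw [ContinuousLinearMap.reApplyInnerSelf]
    rw [ContinuousLinearMap.smul_apply, inner_smul_left, ContinuousLinearMap.add_apply,
      inner_add_left]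
    simp only [Complex.conj_ofReal]
    rw [RCLike.re_to_complex, Complex.re_ofReal_mul]
    have h0 : (0:ℝ) ≤ ((inner ℂ (T x) x : ℂ) + (inner ℂ ((star T) x) x : ℂ)).re := by
      rw [Complex.add_re]; exact hself x
    exact mul_nonneg hc h0

end Aux

theorem stmt_4 {H : Type*} [NormedAddCommGroup H] [InnerProductSpace ℂ H] [CompleteSpace H]
    (A : H →L[ℂ] H) (R : ℝ) (hR : 0 < R) (hA : ‖A‖ < R) (r : ℝ) (hr : r = 1 / R) (θ : ℝ) :
    (muOp r θ A).IsPositive := by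
  set B : H →L[ℂ] H := Complex.exp (-(θ : ℂ) * Complex.I) • (r : ℂ) • A with hBdef
  have hrpos : 0 < r := by rw [hr]; positivity
  have hB : ‖B‖ < 1 := by
    rw [hBdef, norm_smul, norm_smul]
    have h1 : ‖Complex.exp (-(θ : ℂ) * Complex.I)‖ = 1 := by
      rw [Complex.norm_exp]
      simp
    rw [h1, one_mul, Complex.norm_real, Real.norm_eq_abs, abs_of_pos hrpos]
    calc r * ‖A‖ < r * R := by exact mul_lt_mul_of_pos_left hA hrpos
    _ = 1 := by rw [hr]; field_simp
  have hstarB : star B = Complex.exp ((θ : ℂ) * Complex.I) • (r : ℂ) •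
      ContinuousLinearMap.adjoint A := by
    rw [hBdef, star_smul, star_smul]
    congr 1
    · rw [RCLike.star_def, ← Complex.exp_conj]
      congr 1
      simp [map_mul, Complex.conj_I]
    · congr 1
      simp [Complex.conj_ofReal]
  set T : H →L[ℂ] H := (1 + B) * Ring.inverse (1 - B) with hT
  have hcomm : (1 + star B) * Ring.inverse (1 - star B) = star T := by
    rw [hT, star_mul, star_add, star_one, ← Ring.inverse_star, star_sub, star_one]
    have hcom : Commute (1 + star B) (1 - star B) :=
      ((Commute.one_right (1 + star B)).sub_right
        ((Commute.one_left (star B)).add_left (Commute.refl (star B))))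
    have hu : IsUnit (1 - star B) := by
      have : ‖star B‖ < 1 := by rwa [norm_star]
      exact (Units.oneSub (star B) this).isUnit
    obtain ⟨u, huu⟩ := hu
    rw [← huu] at hcom ⊢
    rw [Ring.inverse_unit]
    exact (hcom.units_inv_right).eq
  have hmu : muOp r θ A = (((4 * Real.pi)⁻¹ : ℝ) : ℂ) • (T + star T) := by
    rw [muOp, ← hBdef, ← hstarB, hcomm, ← hT, Complex.ofReal_inv]
  rw [hmu]
  exact aux_pos B hB (4 * Real.pi)⁻¹ (by positivity) T hT
end

section
/- The limit as R → 1⁺ of the infinite product ∏_{n=1}^{∞} (1 − (R² − R⁻²)²/(R^{4n} − R^{−4n})²)⁻¹ equals ∏_{n=1}^{∞} (1 − 1/(4n²))⁻¹ = π/2. -/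
open Real Filter

open Finset Topology in
private lemma one_le_prodR {f : ℕ → ℝ} (hf : ∀ i, 1 ≤ f i) (u : Finset ℕ) :
    (1:ℝ) ≤ ∏ x ∈ u, f x := by
  calc (1:ℝ) = ∏ _x ∈ u, 1 := by simp
  _ ≤ ∏ x ∈ u, f x := Finset.prod_le_prod (by simp) (fun i _ => hf i)

open Finset Topology in
private lemma prodR_mono {f : ℕ → ℝ} (hf : ∀ i, 1 ≤ f i) :
    Monotone fun s : Finset ℕ => ∏ x ∈ s, f x := by
  intro s t hst
  have h := Finset.prod_sdiff hst (f := f)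
  have h1 : (1:ℝ) ≤ ∏ x ∈ t \ s, f x := one_le_prodR hf _
  have h0 : (0:ℝ) ≤ ∏ x ∈ s, f x := le_trans zero_le_one (one_le_prodR hf s)
  simp only
  nlinarith

private lemma hasProd_sup {f : ℕ → ℝ} {c : ℝ} (hf : ∀ i, 1 ≤ f i)
    (h : ∀ u : Finset ℕ, ∏ x ∈ u, f x ≤ c) :
    HasProd f (⨆ u : Finset ℕ, ∏ x ∈ u, f x) :=
  tendsto_atTop_ciSup (prodR_mono hf) ⟨c, fun _ ⟨u, hu⟩ => hu ▸ h u⟩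

private lemma mult_of_prod_le {f : ℕ → ℝ} {c : ℝ} (hf : ∀ i, 1 ≤ f i)
    (h : ∀ u : Finset ℕ, ∏ x ∈ u, f x ≤ c) : Multipliable f :=
  ⟨_, hasProd_sup hf h⟩

private lemma prod_le_tprodR {f : ℕ → ℝ} {c : ℝ} (hf : ∀ i, 1 ≤ f i)
    (h : ∀ u : Finset ℕ, ∏ x ∈ u, f x ≤ c) (s : Finset ℕ) :
    ∏ x ∈ s, f x ≤ ∏' i, f i := by
  rw [(hasProd_sup hf h).tprod_eq]
  exact le_ciSup ⟨c, fun _ ⟨u, hu⟩ => hu ▸ h u⟩ s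

private lemma tprod_leR {f : ℕ → ℝ} {c : ℝ} (hf : ∀ i, 1 ≤ f i)
    (h : ∀ u : Finset ℕ, ∏ x ∈ u, f x ≤ c) : ∏' i, f i ≤ c := by
  rw [(hasProd_sup hf h).tprod_eq]
  exact ciSup_le h

private lemma key_ineq (y : ℝ) (hy : 1 ≤ y) (m : ℕ) :
    (m : ℝ) * (y - y⁻¹) ≤ y ^ m - (y ^ m)⁻¹ := by
  induction m with
  | zero => simp
  | succ m ih =>
    have hy0 : (0:ℝ) < y := by linarith
    have hp : (1:ℝ) ≤ y ^ m := one_le_pow₀ hy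
    have hq : (y ^ m)⁻¹ ≤ 1 := inv_le_one_of_one_le₀ hp
    have hq0 : 0 < (y ^ m)⁻¹ := by positivity
    have hz : y⁻¹ ≤ 1 := inv_le_one_of_one_le₀ hy
    have hz0 : 0 < y⁻¹ := by positivity
    have hpq : y ^ m * (y ^ m)⁻¹ = 1 := mul_inv_cancel₀ (by positivity)
    have hyz : y * y⁻¹ = 1 := mul_inv_cancel₀ (ne_of_gt hy0)
    push_cast
    rw [pow_succ, mul_inv]
    nlinarith [mul_nonneg (mul_nonneg (sub_nonneg.2 hp) (sub_nonneg.2 hy))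
      (sub_nonneg.2 (mul_le_one₀ hq hz0.le hz)), ih]

noncomputable def cc (n : ℕ) : ℝ := (1 - 1 / (4 * ((n : ℝ) + 1) ^ 2))⁻¹

noncomputable def gg (n : ℕ) (R : ℝ) : ℝ :=
  (1 - (R ^ 2 - (R ^ 2)⁻¹) ^ 2 / (R ^ (4 * (n + 1)) - (R ^ (4 * (n + 1)))⁻¹) ^ 2)⁻¹

private lemma csub_pos (n : ℕ) : (0:ℝ) < 1 - 1 / (4 * ((n : ℝ) + 1) ^ 2) := by
  have h1 : (1:ℝ) ≤ ((n:ℝ)+1) := by have := Nat.cast_nonneg (α:=ℝ) n; linarith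
  have : (4:ℝ) ≤ 4 * ((n : ℝ) + 1) ^ 2 := by nlinarith
  have : 1 / (4 * ((n : ℝ) + 1) ^ 2) ≤ 1/4 := by
    apply div_le_div_of_nonneg_left one_pos.le (by norm_num) this |>.trans_eq (by norm_num)
  linarith

private lemma one_le_cc (n : ℕ) : 1 ≤ cc n := by
  have h := csub_pos n
  have h2 : 1 - 1 / (4 * ((n : ℝ) + 1) ^ 2) ≤ 1 := by
    have : 0 ≤ 1 / (4 * ((n : ℝ) + 1) ^ 2) := by positivity
    linarith
  exact one_le_inv_iff₀.2 ⟨h, h2⟩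

private lemma gg_bounds {R : ℝ} (hR : 1 < R) (n : ℕ) : 1 ≤ gg n R ∧ gg n R ≤ cc n := by
  have hR0 : (0:ℝ) < R := by linarith
  have hy : (1:ℝ) < R ^ 2 := one_lt_pow₀ hR two_ne_zero
  set y := R ^ 2 with hydef
  have ha : 0 < y - y⁻¹ := by
    have : y⁻¹ < 1 := inv_lt_one_of_one_lt₀ hy
    linarith
  have hpow : R ^ (4 * (n + 1)) = y ^ (2 * (n + 1)) := by
    rw [hydef, ← pow_mul]; ring_nf
  have hkey := key_ineq y hy.le (2 * (n + 1))
  set b := y ^ (2 * (n + 1)) - (y ^ (2 * (n + 1)))⁻¹ with hbdef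
  have hm : (2:ℝ) * (n + 1) ≤ ((2 * (n + 1) : ℕ) : ℝ) := by push_cast; linarith
  have hmb : (2 * ((n:ℝ) + 1)) * (y - y⁻¹) ≤ b := by
    calc (2 * ((n:ℝ) + 1)) * (y - y⁻¹) ≤ ((2 * (n + 1) : ℕ) : ℝ) * (y - y⁻¹) := by
          apply mul_le_mul_of_nonneg_right hm ha.le
    _ ≤ b := hkey
  have hb0 : 0 < b := lt_of_lt_of_le (by positivity) hmb
  set w := (y - y⁻¹) ^ 2 / b ^ 2 with hwdef
  have hw0 : 0 < w := by positivity
  have hw : w ≤ 1 / (4 * ((n : ℝ) + 1) ^ 2) := by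
    rw [hwdef, div_le_div_iff₀ (by positivity) (by positivity)]
    nlinarith [mul_le_mul hmb hmb (by positivity : (0:ℝ) ≤ 2 * ((n:ℝ) + 1) * (y - y⁻¹)) hb0.le]
  have h1w : 0 < 1 - w := by have := csub_pos n; linarith
  have hgg : gg n R = (1 - w)⁻¹ := by
    rw [gg, hpow]
  constructor
  · rw [hgg]
    exact one_le_inv_iff₀.2 ⟨h1w, by linarith⟩
  · rw [hgg, cc]
    exact inv_anti₀ (csub_pos n) (by linarith)

open Finset Topology in
private lemma wallis_cc : Tendsto (fun k => ∏ i ∈ Finset.range k, cc i) atTop (𝓝 (π/2)) := by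
  refine Real.tendsto_prod_pi_div_two.congr fun k => Finset.prod_congr rfl fun i _ => ?_
  rw [cc]
  have h : (1 - 1/(4*((i:ℝ)+1)^2)) = (2*(i:ℝ)+1)*(2*(i:ℝ)+3) / (2*(i:ℝ)+2)^2 := by
    have h2 : ((i:ℝ)+1) ≠ 0 := by positivity
    field_simp
    ring
  rw [h, inv_div]
  have h1 : (2*(i:ℝ)+1) ≠ 0 := by positivity
  have h3 : (2*(i:ℝ)+3) ≠ 0 := by positivity
  field_simp

open Finset Topology in
private lemma gg_tendsto (n : ℕ) : Tendsto (gg n) (nhdsWithin 1 (Set.Ioi 1)) (𝓝 (cc n)) := by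
  set r : ℝ → ℝ := fun R => R ^ (4 * n + 2) / ∑ k ∈ Finset.range (2 * n + 2), (R ^ 4) ^ k with hr
  have hS1 : (∑ k ∈ Finset.range (2 * n + 2), ((1:ℝ) ^ 4) ^ k) = 2 * (n:ℝ) + 2 := by
    simp [Finset.sum_const]
  have hcont : ContinuousAt (fun R : ℝ => (1 - r R ^ 2)⁻¹) 1 := by
    have hSc : Continuous fun R : ℝ => ∑ k ∈ Finset.range (2 * n + 2), (R ^ 4) ^ k := by
      apply continuous_finset_sum; intro k _; continuity
    have hrc : ContinuousAt r 1 := by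
      apply ContinuousAt.div (by fun_prop) hSc.continuousAt
      have h0 : (∑ k ∈ Finset.range (2 * n + 2), ((1:ℝ) ^ 4) ^ k) ≠ 0 := by
        rw [hS1]
        have : (0:ℝ) < 2 * (n:ℝ) + 2 := by positivity
        linarith
      simpa using h0
    apply ContinuousAt.inv₀ (by fun_prop)
    have hr1 : r 1 = 1 / (2 * (n:ℝ) + 2) := by simp [hr, hS1]
    have hlt : r 1 ^ 2 < 1 := by
      rw [hr1]
      have h2 : (1:ℝ) ≤ 2 * (n:ℝ) + 2 := by have := Nat.cast_nonneg (α:=ℝ) n; linarith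
      have hpos : (0:ℝ) < 1 / (2 * (n:ℝ) + 2) := by positivity
      have hhalf : 1 / (2 * (n:ℝ) + 2) ≤ 1/2 := by
        rw [div_le_div_iff₀ (by positivity) (by norm_num)]; linarith
      nlinarith
    intro h
    simp only [sub_eq_zero] at h
    exact absurd h.symm (ne_of_lt hlt)
  have hval : (1 - r 1 ^ 2)⁻¹ = cc n := by
    rw [cc, hr]
    simp only [one_pow, hS1]
    norm_num
    field_simp
    ring
  have hmain : Tendsto (fun R => (1 - r R ^ 2)⁻¹) (nhdsWithin 1 (Set.Ioi 1)) (𝓝 (cc n)) := by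
    rw [← hval]
    exact (hcont.tendsto).mono_left nhdsWithin_le_nhds
  refine hmain.congr' ?_
  filter_upwards [self_mem_nhdsWithin] with R hR
  have hR1 : (1:ℝ) < R := hR
  have hR0 : (0:ℝ) < R := by linarith
  have hb : (0:ℝ) < R ^ (4 * (n + 1)) - (R ^ (4 * (n + 1)))⁻¹ := by
    have h1 : (1:ℝ) < R ^ (4 * (n + 1)) := one_lt_pow₀ hR1 (by positivity)
    have h2 : (R ^ (4 * (n + 1)))⁻¹ < 1 := inv_lt_one_of_one_lt₀ h1
    linarith
  have hS : (0:ℝ) < ∑ k ∈ Finset.range (2 * n + 2), (R ^ 4) ^ k :=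
    Finset.sum_pos (fun k _ => by positivity) ⟨0, by simp⟩
  have key : (R ^ 2 - (R ^ 2)⁻¹) / (R ^ (4 * (n + 1)) - (R ^ (4 * (n + 1)))⁻¹) = r R := by
    have geom := geom_sum_mul (R ^ 4) (2 * n + 2)
    rw [hr, div_eq_div_iff (ne_of_gt hb) (ne_of_gt hS)]
    field_simp
    linear_combination (R ^ (4 * n + 2) * R ^ 2) * geom
  rw [gg, ← key, div_pow]

open Finset Topology in
private lemma cc_finset_le (u : Finset ℕ) : ∏ x ∈ u, cc x ≤ π/2 := by
  obtain ⟨N, hN⟩ := u.exists_nat_subset_range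
  refine (prodR_mono one_le_cc hN).trans ?_
  exact ((prodR_mono one_le_cc).comp (fun _ _ h => Finset.range_mono h)).ge_of_tendsto wallis_cc N

private lemma mult_cc : Multipliable cc := mult_of_prod_le one_le_cc cc_finset_le

open Finset Topology in
private lemma tprod_cc : ∏' n, cc n = π/2 :=
  tendsto_nhds_unique mult_cc.hasProd.tendsto_prod_nat wallis_cc

open Finset Topology in
private lemma mult_gg {R : ℝ} (hR : 1 < R) : Multipliable (fun n => gg n R) := by
  refine mult_of_prod_le (c := π/2) (fun n => (gg_bounds hR n).1) (fun u => ?_)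
  refine le_trans ?_ (cc_finset_le u)
  exact Finset.prod_le_prod (fun i _ => le_trans zero_le_one (gg_bounds hR i).1)
    (fun i _ => (gg_bounds hR i).2)

theorem stmt_8 :
    Filter.Tendsto
      (fun R : ℝ => ∏' n : ℕ,
        (1 - (R ^ 2 - (R ^ 2)⁻¹) ^ 2 / (R ^ (4 * (n + 1)) - (R ^ (4 * (n + 1)))⁻¹) ^ 2)⁻¹)
      (nhdsWithin 1 (Set.Ioi 1)) (nhds (π / 2)) ∧
    (∏' n : ℕ, (1 - 1 / (4 * ((n : ℝ) + 1) ^ 2))⁻¹) = π / 2 := by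
  constructor
  · show Tendsto (fun R : ℝ => ∏' n : ℕ, gg n R) (nhdsWithin 1 (Set.Ioi 1)) (nhds (π / 2))
    refine tendsto_order.2 ⟨?_, ?_⟩
    · intro b hb
      obtain ⟨N, hN⟩ := (wallis_cc.eventually (eventually_gt_nhds hb)).exists
      have hL : Tendsto (fun R => ∏ i ∈ Finset.range N, gg i R) (nhdsWithin 1 (Set.Ioi 1))
          (nhds (∏ i ∈ Finset.range N, cc i)) :=
        tendsto_finset_prod _ (fun i _ => gg_tendsto i)
      filter_upwards [hL.eventually (eventually_gt_nhds hN), self_mem_nhdsWithin] with R h1 h2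
      refine lt_of_lt_of_le h1 ?_
      refine prod_le_tprodR (c := π/2) (fun i => (gg_bounds h2 i).1) (fun u => ?_) (Finset.range N)
      refine le_trans ?_ (cc_finset_le u)
      exact Finset.prod_le_prod (fun i _ => le_trans zero_le_one (gg_bounds h2 i).1)
        (fun i _ => (gg_bounds h2 i).2)
    · intro b hb
      filter_upwards [self_mem_nhdsWithin] with R hR
      refine lt_of_le_of_lt ?_ hb
      refine tprod_leR (c := π/2) (fun i => (gg_bounds hR i).1) (fun u => ?_)
      refine le_trans ?_ (cc_finset_le u)
      exact Finset.prod_le_prod (fun i _ => le_trans zero_le_one (gg_bounds hR i).1)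
        (fun i _ => (gg_bounds hR i).2)
  · exact tprod_cc
end

section
/- For every real R > 1, the identity 2(1 − R⁻²)·∏_{n=1}^{∞}((1 − R^{−8n})/(1 − R^{4−8n}))² = (2/(1 + R⁻²))·∏_{n=1}^{∞}(1 − (R² − R⁻²)²/(R^{4n} − R^{−4n})²)⁻¹ holds, and in particular this quantity is strictly greater than 2/(1 + R⁻²). -/
open Real Filter Finset

private lemma abs_log_le' {x : ℝ} (hx : 0 < x) : |Real.log x| ≤ |x - 1| + |x⁻¹ - 1| := by
  rcases le_or_gt 1 x with h | h
  · rw [abs_of_nonneg (Real.log_nonneg h)]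
    have h1 := Real.log_le_sub_one_of_pos hx
    have : |x - 1| = x - 1 := abs_of_nonneg (by linarith)
    nlinarith [abs_nonneg (x⁻¹ - 1)]
  · rw [abs_of_nonpos (Real.log_nonpos hx.le h.le)]
    have h1 := Real.log_le_sub_one_of_pos (inv_pos.mpr hx)
    rw [Real.log_inv] at h1
    have hxi : 1 ≤ x⁻¹ := by
      nlinarith [mul_inv_cancel₀ hx.ne']
    have h2 : |x⁻¹ - 1| = x⁻¹ - 1 := abs_of_nonneg (by linarith)
    nlinarith [abs_nonneg (x - 1)]

private lemma multipliable_aux {f : ℕ → ℝ} {K r : ℝ} (hr0 : 0 ≤ r) (hr1 : r < 1)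
    (hpos : ∀ n, 0 < f n) (hb : ∀ n, |f n - 1| + |(f n)⁻¹ - 1| ≤ K * r ^ n) :
    Multipliable f := by
  have hlog : Summable fun n => Real.log (f n) := by
    apply Summable.of_abs
    apply Summable.of_nonneg_of_le (fun n => abs_nonneg _)
      (fun n => le_trans (abs_log_le' (hpos n)) (hb n))
    exact (summable_geometric_of_lt_one hr0 hr1).mul_left K
  exact Real.multipliable_of_summable_log hpos hlog

private lemma abs_pair_le {b : ℝ} (hb : 1 ≤ b) : |b - 1| + |b⁻¹ - 1| ≤ 2 * (b - 1) := by
  have hb0 : 0 < b := lt_of_lt_of_le one_pos hb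
  have hbi : b⁻¹ ≤ 1 := inv_le_one_of_one_le₀ hb
  have hbi0 : 0 < b⁻¹ := inv_pos.mpr hb0
  rw [abs_of_nonneg (by linarith), abs_of_nonpos (by linarith)]
  nlinarith [mul_inv_cancel₀ hb0.ne']

private lemma key_alg {x y z : ℝ} (hx : (1:ℝ) - x ≠ 0) (hy : (1:ℝ) - y ≠ 0) :
    ((1 - z) / (1 - x)) ^ 2 = (1 - z) ^ 2 / ((1 - x) * (1 - y)) * ((1 - y) / (1 - x)) := by
  field_simp

set_option maxHeartbeats 1000000 in
theorem stmt_9 (R : ℝ) (hR : 1 < R) :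
    (2 * (1 - (R ^ 2)⁻¹) *
        ∏' n : ℕ, ((1 - (R ^ (8 * (n + 1)))⁻¹) / (1 - R ^ 4 * (R ^ (8 * (n + 1)))⁻¹)) ^ 2 =
      (2 / (1 + (R ^ 2)⁻¹)) *
        ∏' n : ℕ,
          (1 - (R ^ 2 - (R ^ 2)⁻¹) ^ 2 / (R ^ (4 * (n + 1)) - (R ^ (4 * (n + 1)))⁻¹) ^ 2)⁻¹) ∧
    2 / (1 + (R ^ 2)⁻¹) <
      2 * (1 - (R ^ 2)⁻¹) *
        ∏' n : ℕ, ((1 - (R ^ (8 * (n + 1)))⁻¹) / (1 - R ^ 4 * (R ^ (8 * (n + 1)))⁻¹)) ^ 2 := by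
  have hR0 : (0:ℝ) < R := lt_trans one_pos hR
  set t : ℝ := (R ^ 4)⁻¹ with ht
  have ht0 : 0 < t := by positivity
  have hR4 : 1 < R ^ 4 := by nlinarith [sq_nonneg R, sq_nonneg (R-1), sq_nonneg (R+1), sq_nonneg (R^2-1)]
  have ht1 : t < 1 := by rw [ht]; exact inv_lt_one_of_one_lt₀ hR4
  clear_value t
  have htk1 : ∀ k : ℕ, k ≠ 0 → t ^ k < 1 := fun k hk => pow_lt_one₀ ht0.le ht1 hk
  have htkt : ∀ k : ℕ, k ≠ 0 → t ^ k ≤ t := by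
    intro k hk
    calc t ^ k ≤ t ^ 1 := pow_le_pow_of_le_one ht0.le ht1.le (by omega)
    _ = t := pow_one t
  have htmono : ∀ j k : ℕ, j ≤ k → t ^ k ≤ t ^ j :=
    fun j k h => pow_le_pow_of_le_one ht0.le ht1.le h
  set B : ℕ → ℝ := fun n =>
    (1 - (R ^ 2 - (R ^ 2)⁻¹) ^ 2 / (R ^ (4 * (n + 1)) - (R ^ (4 * (n + 1)))⁻¹) ^ 2)⁻¹ with hBdef
  set C : ℕ → ℝ := fun n => (1 - t ^ (2*n+3)) / (1 - t ^ (2*n+1)) with hCdef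
  clear_value B C
  -- B in t-form
  have hBt : ∀ n : ℕ, B n = (1 - t ^ (2*n+2))^2 / ((1 - t ^ (2*n+1)) * (1 - t ^ (2*n+3))) := by
    intro n
    have hin : 1 - (R ^ 2 - (R ^ 2)⁻¹) ^ 2 / (R ^ (4 * (n + 1)) - (R ^ (4 * (n + 1)))⁻¹) ^ 2
        = ((1 - t ^ (2*n+1)) * (1 - t ^ (2*n+3))) / (1 - t ^ (2*n+2))^2 := by
      set v : ℝ := t ^ (n+1) with hv
      have hv0 : 0 < v := by positivity
      have hvt : v ≤ t := htkt (n+1) (by omega)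
      have hv1 : v < 1 := lt_of_le_of_lt hvt ht1
      have hw : R ^ (4*(n+1)) = v⁻¹ := by
        rw [hv, ht, ← inv_pow, inv_inv, ← pow_mul]
      have hw2 : (R ^ (4*(n+1)))⁻¹ = v := by rw [hw, inv_inv]
      have hz : t ^ (2*n+2) = v ^ 2 := by rw [hv, ← pow_mul]; ring_nf
      have hx : t ^ (2*n+1) * t = v ^ 2 := by rw [← hz, ← pow_succ]
      have hy : t ^ (2*n+3) = v ^ 2 * t := by rw [← hz, ← pow_succ]
      have hs : (R ^ 2)⁻¹ ^ 2 = t := by rw [ht, inv_pow, ← pow_mul]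
      have hR2 : R ^ 2 = ((R ^ 2)⁻¹)⁻¹ := by rw [inv_inv]
      set s : ℝ := (R ^ 2)⁻¹ with hsdef
      have hs0 : 0 < s := by positivity
      have hxv : t ^ (2*n+1) = v ^ 2 / t := by rw [eq_div_iff ht0.ne']; exact hx
      have h1z : (1:ℝ) - v ^ 2 ≠ 0 := by nlinarith
      have hvne : v ≠ 0 := hv0.ne'
      have hdiff : v⁻¹ - v ≠ 0 := by
        have : v⁻¹ > 1 := by nlinarith [mul_inv_cancel₀ hvne]
        nlinarith
      rw [hw2, hw, hz, hxv, hy, hR2, ← hs]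
      clear_value s v
      clear ht hv hsdef hw hw2 hz hx hy hxv hs hR2 hR4 ht0 ht1 hvt htk1 htkt htmono hBdef hCdef
      have hrw : v⁻¹ - v = (1 - v^2)/v := by field_simp
      rw [hrw, div_pow]
      field_simp
      ring
    rw [hBdef]
    simp only []
    rw [hin, inv_div]
  have hx0 : ∀ n : ℕ, (0:ℝ) < 1 - t ^ (2*n+1) := fun n => by
    have := htk1 (2*n+1) (by omega); linarith
  have hy0 : ∀ n : ℕ, (0:ℝ) < 1 - t ^ (2*n+3) := fun n => by
    have := htk1 (2*n+3) (by omega); linarith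
  have hz0 : ∀ n : ℕ, (0:ℝ) < 1 - t ^ (2*n+2) := fun n => by
    have := htk1 (2*n+2) (by omega); linarith
  have hnum : ∀ n : ℕ, (1 - t ^ (2*n+2))^2 - (1 - t ^ (2*n+1)) * (1 - t ^ (2*n+3))
      = t ^ (2*n+1) * (1 - t)^2 := by
    intro n
    have h1 : t ^ (2*n+2) = t ^ (2*n+1) * t := by rw [← pow_succ]
    have h2 : t ^ (2*n+3) = t ^ (2*n+1) * t ^ 2 := by rw [← pow_add]
    rw [h1, h2]; ring
  -- B n > 1
  have hBgt : ∀ n : ℕ, 1 < B n := by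
    intro n
    rw [hBt n, one_lt_div (mul_pos (hx0 n) (hy0 n))]
    have hp : 0 < t ^ (2*n+1) * (1 - t)^2 :=
      mul_pos (pow_pos ht0 _) (pow_pos (by linarith : (0:ℝ) < 1 - t) 2)
    linarith [hnum n]
  -- B n - 1 bound
  have hBsub : ∀ n : ℕ, B n - 1 ≤ t ^ (2*n+1) := by
    intro n
    have hdenom : (0:ℝ) < (1 - t ^ (2*n+1)) * (1 - t ^ (2*n+3)) := mul_pos (hx0 n) (hy0 n)
    have e : B n - 1 = (t ^ (2*n+1) * (1 - t)^2) / ((1 - t ^ (2*n+1)) * (1 - t ^ (2*n+3))) := by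
      rw [hBt n, div_sub_one hdenom.ne', hnum n]
    have hd2 : (1 - t) * (1 - t) ≤ (1 - t ^ (2*n+1)) * (1 - t ^ (2*n+3)) := by
      have := htkt (2*n+1) (by omega); have := htkt (2*n+3) (by omega)
      nlinarith [ht1]
    rw [e, div_le_iff₀ hdenom]
    nlinarith [pow_pos ht0 (2*n+1)]
  -- C facts
  have hCge : ∀ n : ℕ, 1 ≤ C n := by
    intro n
    rw [hCdef]
    rw [one_le_div (hx0 n)]
    have := htmono (2*n+1) (2*n+3) (by omega)
    linarith
  have hCsub : ∀ n : ℕ, C n - 1 ≤ t ^ (2*n+1) / (1 - t) := by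
    intro n
    have e : C n - 1 = (t ^ (2*n+1) - t ^ (2*n+3)) / (1 - t ^ (2*n+1)) := by
      rw [hCdef, div_sub_one (hx0 n).ne']; ring_nf
    rw [e]
    apply div_le_div₀ (by positivity)
    · have : (0:ℝ) ≤ t ^ (2*n+3) := by positivity
      linarith
    · linarith
    · have := htkt (2*n+1) (by omega); linarith
  -- geometric rewriting
  have hgeo : ∀ n : ℕ, t ^ (2*n+1) = t * (t^2)^n := by
    intro n
    rw [← pow_mul, show 2*n+1 = 1 + 2*n by ring, pow_add, pow_one]
  have ht2 : t^2 < 1 := by nlinarith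
  -- multipliability
  have hBpos : ∀ n : ℕ, 0 < B n := fun n => lt_trans one_pos (hBgt n)
  have hCpos : ∀ n : ℕ, 0 < C n := fun n => lt_of_lt_of_le one_pos (hCge n)
  have hBmul : Multipliable B := by
    apply multipliable_aux (K := 2*t) (r := t^2) (by positivity) ht2 hBpos
    intro n
    calc |B n - 1| + |(B n)⁻¹ - 1| ≤ 2 * (B n - 1) := abs_pair_le (hBgt n).le
      _ ≤ 2 * t ^ (2*n+1) := by nlinarith [hBsub n]
      _ = 2 * t * (t^2)^n := by rw [hgeo n]; ring
  have hCmul : Multipliable C := by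
    apply multipliable_aux (K := 2*t/(1-t)) (r := t^2) (by positivity) ht2 hCpos
    intro n
    calc |C n - 1| + |(C n)⁻¹ - 1| ≤ 2 * (C n - 1) := abs_pair_le (hCge n)
      _ ≤ 2 * (t ^ (2*n+1) / (1 - t)) := by nlinarith [hCsub n]
      _ = 2 * t / (1 - t) * (t^2)^n := by rw [hgeo n]; ring
  -- telescoping value of C
  have hCprod : HasProd C (1 - t)⁻¹ := by
    rw [hCmul.hasProd_iff_tendsto_nat]
    have hpartial : ∀ N : ℕ, ∏ n ∈ range N, C n = (1 - t ^ (2*N+1)) / (1 - t) := by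
      intro N
      induction N with
      | zero => simp [pow_one, div_self (by linarith : (1:ℝ) - t ≠ 0)]
      | succ N ih =>
        rw [prod_range_succ, ih, hCdef]
        have hxN := (hx0 N).ne'
        rw [show 2*(N+1)+1 = 2*N+3 by ring, div_mul_div_comm,
          mul_comm ((1:ℝ)-t) (1 - t^(2*N+1)), mul_div_mul_left _ _ hxN]
    have h1 : Tendsto (fun N : ℕ => t ^ (2*N+1)) atTop (nhds 0) := by
      have h0 : Tendsto (fun N : ℕ => (t^2)^N) atTop (nhds 0) :=
        tendsto_pow_atTop_nhds_zero_of_lt_one (by positivity) ht2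
      have h2 := h0.const_mul t
      simp only [mul_zero] at h2
      exact Tendsto.congr (fun N => (hgeo N).symm) h2
    have h3 := ((tendsto_const_nhds (x := (1:ℝ))).sub h1).div_const (1 - t)
    have h4 : ((1:ℝ) - 0) / (1 - t) = (1 - t)⁻¹ := by rw [sub_zero, one_div]
    rw [h4] at h3
    exact Tendsto.congr (fun N => (hpartial N).symm) h3
  have hCval : ∏' n, C n = (1 - t)⁻¹ := hCprod.tprod_eq
  -- termwise identity A = B * C
  have hA : ∀ n : ℕ,
      ((1 - (R ^ (8 * (n + 1)))⁻¹) / (1 - R ^ 4 * (R ^ (8 * (n + 1)))⁻¹)) ^ 2 = B n * C n := by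
    intro n
    have he8 : (R ^ (8*(n+1)))⁻¹ = t ^ (2*n+2) := by
      rw [show 8*(n+1) = 4*(2*n+2) by ring, pow_mul, ht, ← inv_pow]
    have hmul : R ^ 4 * t ^ (2*n+2) = t ^ (2*n+1) := by
      rw [show 2*n+2 = 1+(2*n+1) by ring, pow_add, pow_one, ht, ← mul_assoc,
        mul_inv_cancel₀ (by positivity : (R:ℝ)^4 ≠ 0), one_mul]
    rw [he8, hmul, hBt n, hCdef]
    exact key_alg (hx0 n).ne' (hy0 n).ne'
  have htprodA : ∏' n : ℕ, ((1 - (R ^ (8 * (n + 1)))⁻¹) / (1 - R ^ 4 * (R ^ (8 * (n + 1)))⁻¹)) ^ 2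
      = (∏' n, B n) * (1 - t)⁻¹ := by
    rw [tprod_congr hA, hBmul.tprod_mul hCmul, hCval]
  -- prefactor identity
  have hs2 : ((R ^ 2)⁻¹) ^ 2 = t := by rw [ht, inv_pow, ← pow_mul]
  have hs0 : (0:ℝ) < (R ^ 2)⁻¹ := by positivity
  have hs1 : (R ^ 2)⁻¹ < 1 := by
    apply inv_lt_one_of_one_lt₀; nlinarith
  have hpre : 2 * (1 - (R ^ 2)⁻¹) * (1 - t)⁻¹ = 2 / (1 + (R ^ 2)⁻¹) := by
    have h1t : 1 - t = (1 - (R ^ 2)⁻¹) * (1 + (R ^ 2)⁻¹) := by rw [← hs2]; ring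
    have hne1 : (1:ℝ) - (R ^ 2)⁻¹ ≠ 0 := by linarith
    calc 2 * (1 - (R ^ 2)⁻¹) * (1 - t)⁻¹
        = 2 * (1 - (R ^ 2)⁻¹) * ((1 - (R ^ 2)⁻¹)⁻¹ * (1 + (R ^ 2)⁻¹)⁻¹) := by
          rw [h1t, mul_inv]
      _ = 2 * ((1 - (R ^ 2)⁻¹) * (1 - (R ^ 2)⁻¹)⁻¹) * (1 + (R ^ 2)⁻¹)⁻¹ := by
          rw [mul_assoc, mul_assoc, mul_assoc]
      _ = 2 * (1 + (R ^ 2)⁻¹)⁻¹ := by rw [mul_inv_cancel₀ hne1, mul_one]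
      _ = 2 / (1 + (R ^ 2)⁻¹) := (div_eq_mul_inv 2 _).symm
  -- main equality
  have heq : 2 * (1 - (R ^ 2)⁻¹) *
        ∏' n : ℕ, ((1 - (R ^ (8 * (n + 1)))⁻¹) / (1 - R ^ 4 * (R ^ (8 * (n + 1)))⁻¹)) ^ 2 =
      (2 / (1 + (R ^ 2)⁻¹)) * ∏' n, B n := by
    rw [htprodA, ← hpre]; ring
  have hPB : 1 < ∏' n, B n := by
    have hle : B 0 ≤ ∏' n, B n := by
      refine ge_of_tendsto hBmul.hasProd.tendsto_prod_nat ?_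
      have hmono : ∀ N : ℕ, B 0 ≤ ∏ i ∈ range (N+1), B i := by
        intro N
        induction N with
        | zero => simp
        | succ N ih =>
          rw [prod_range_succ]
          nlinarith [hBgt (N+1), hBpos 0]
      refine eventually_atTop.mpr ⟨1, fun N hN => ?_⟩
      obtain ⟨M, rfl⟩ : ∃ M, N = M + 1 := ⟨N - 1, by omega⟩
      exact hmono M
    exact lt_of_lt_of_le (hBgt 0) hle
  have hpos2 : (0:ℝ) < 2 / (1 + (R ^ 2)⁻¹) := by positivity
  refine ⟨heq, ?_⟩
  rw [heq]
  calc 2 / (1 + (R ^ 2)⁻¹) = 2 / (1 + (R ^ 2)⁻¹) * 1 := (mul_one _).symm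
    _ < 2 / (1 + (R ^ 2)⁻¹) * ∏' n, B n := by
        exact mul_lt_mul_of_pos_left hPB hpos2
end

section
/- Let H be a complex Hilbert space and A ∈ L(H) with ‖A‖ < R, r = 1/R. Then ∫_0^{2π} μ(θ, A) dθ = I (the identity operator), where μ(θ,A) = (1/(4π))·((1 + e^{−iθ}rA)(1 − e^{−iθ}rA)⁻¹ + (1 + e^{iθ}rA*)(1 − e^{iθ}rA*)⁻¹). -/
open Complex

open MeasureTheory intervalIntegral in
private lemma stmt10_aux_key {H : Type*} [NormedAddCommGroup H] [InnerProductSpace ℂ H]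
    [CompleteSpace H] (D : H →L[ℂ] H) (hD : ‖D‖ < 1) :
    ∫ θ in (0:ℝ)..(2*Real.pi), Ring.inverse (1 - Complex.exp (-(θ:ℂ) * Complex.I) • D)
      = (2*Real.pi : ℝ) • (1 : H →L[ℂ] H) := by
  have twopi : (0:ℝ) ≤ 2*Real.pi := by positivity
  have normB : ∀ θ : ℝ, ‖Complex.exp (-(θ:ℂ) * Complex.I) • D‖ < 1 := by
    intro θ
    rw [norm_smul, Complex.norm_exp]
    simpa using hD
  set F : ℕ → ℝ → (H →L[ℂ] H) := fun n θ => (Complex.exp (-(θ:ℂ) * Complex.I) • D)^n with hF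
  have hFeq : ∀ n θ, F n θ = Complex.exp (-Complex.I * n * θ) • D^n := by
    intro n θ
    rw [hF]
    simp only [smul_pow, ← Complex.exp_nat_mul]
    ring_nf
  have hFnorm : ∀ n θ, ‖F n θ‖ = ‖D^n‖ := by
    intro n θ
    rw [hFeq, norm_smul, Complex.norm_exp]
    simp
  have hFcont : ∀ n, Continuous (F n) := by
    intro n
    apply Continuous.pow
    exact ((Complex.continuous_exp.comp (by continuity)).smul continuous_const)
  have hFint : ∀ n, Integrable (F n) (volume.restrict (Set.Ioc (0:ℝ) (2*Real.pi))) := fun n =>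
    ((hFcont n).integrableOn_Ioc).integrable
  have hDn : ∀ n : ℕ, ‖D^n‖ ≤ ‖D‖^n := by
    intro n
    rcases Nat.eq_zero_or_pos n with h | h
    · subst h
      simpa [ContinuousLinearMap.one_def] using ContinuousLinearMap.norm_id_le (𝕜 := ℂ) (E := H)
    · exact norm_pow_le' D h
  have hμtop : (volume.restrict (Set.Ioc (0:ℝ) (2*Real.pi))) Set.univ
      = ENNReal.ofReal (2*Real.pi) := by
    rw [Measure.restrict_apply_univ, Real.volume_Ioc, sub_zero]
  have hIntNorm : ∀ n, ∫ θ, ‖F n θ‖ ∂(volume.restrict (Set.Ioc (0:ℝ) (2*Real.pi)))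
      = (2*Real.pi) * ‖D^n‖ := by
    intro n
    simp only [hFnorm]
    rw [MeasureTheory.integral_const, measureReal_def, hμtop, ENNReal.toReal_ofReal twopi, smul_eq_mul]
  have hSummable : Summable fun n =>
      ∫ θ, ‖F n θ‖ ∂(volume.restrict (Set.Ioc (0:ℝ) (2*Real.pi))) := by
    simp only [hIntNorm]
    apply Summable.mul_left
    apply Summable.of_nonneg_of_le (fun n => norm_nonneg _) hDn
    exact summable_geometric_of_lt_one (norm_nonneg D) hD
  have hHasSum := hasSum_integral_of_summable_integral_norm hFint hSummable
  have htsum : ∀ θ : ℝ, (∑' n, F n θ)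
      = Ring.inverse (1 - Complex.exp (-(θ:ℂ) * Complex.I) • D) := by
    intro θ
    exact (hasSum_geom_series_inverse _ (normB θ)).tsum_eq
  have hIntF : ∀ n : ℕ, (∫ θ, F n θ ∂(volume.restrict (Set.Ioc (0:ℝ) (2*Real.pi))))
      = if n = 0 then (2*Real.pi : ℝ) • (1 : H →L[ℂ] H) else 0 := by
    intro n
    rcases Nat.eq_zero_or_pos n with h | h
    · subst h
      simp only [hF, pow_zero, if_pos]
      rw [MeasureTheory.integral_const, measureReal_def, hμtop, ENNReal.toReal_ofReal twopi]
    · rw [if_neg h.ne']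
      simp only [hFeq]
      rw [_root_.integral_smul_const]
      have hz : (∫ θ : ℝ, Complex.exp (-Complex.I * n * θ)
          ∂(volume.restrict (Set.Ioc (0:ℝ) (2*Real.pi)))) = 0 := by
        have h1 : (∫ θ : ℝ, Complex.exp (-Complex.I * n * θ)
            ∂(volume.restrict (Set.Ioc (0:ℝ) (2*Real.pi))))
            = ∫ θ in (0:ℝ)..(2*Real.pi), Complex.exp ((-Complex.I * n) * θ) := by
          rw [integral_of_le twopi]
        rw [h1, integral_exp_mul_complex (by simp [h.ne'])]
        have h2 : Complex.exp (-Complex.I * n * ((2*Real.pi : ℝ):ℂ)) = 1 := by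
          have := Complex.exp_int_mul_two_pi_mul_I (-(n:ℤ))
          convert this using 2
          push_cast; ring
        rw [h2]
        simp
      rw [hz, zero_smul]
  have hgoal : HasSum (fun n => ∫ θ, F n θ ∂(volume.restrict (Set.Ioc (0:ℝ) (2*Real.pi))))
      ((2*Real.pi : ℝ) • (1 : H →L[ℂ] H)) := by
    rw [funext hIntF]
    exact hasSum_ite_eq 0 _
  have hval := hHasSum.unique hgoal
  rw [integral_of_le twopi, ← hval]
  exact integral_congr_ae (Filter.Eventually.of_forall fun θ => (htsum θ).symm)

private lemma stmt10_aux_mul_inv {R : Type*} [NormedRing R] [CompleteSpace R]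
    (x : R) (hx : ‖x‖ < 1) :
    (1 + x) * Ring.inverse (1 - x)
      = Ring.inverse (1 - x) + Ring.inverse (1 - x) - 1 := by
  have hunit := isUnit_one_sub_of_norm_lt_one hx
  have h1 : (1 + x : R) = 1 + 1 - (1 - x) := by abel
  rw [h1, sub_mul, add_mul, one_mul, Ring.mul_inverse_cancel _ hunit]

private lemma stmt10_aux_cont {H : Type*} [NormedAddCommGroup H] [InnerProductSpace ℂ H]
    [CompleteSpace H] (D : H →L[ℂ] H) (hD : ‖D‖ < 1) (c : ℂ) (hc : c.re = 0) :
    Continuous (fun θ : ℝ => Ring.inverse (1 - Complex.exp ((θ:ℂ) * c) • D)) := by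
  rw [continuous_iff_continuousAt]
  intro θ
  have hu : ‖Complex.exp ((θ:ℂ) * c) • D‖ < 1 := by
    rw [norm_smul, Complex.norm_exp]
    have : ((θ:ℂ) * c).re = 0 := by simp [hc]
    rw [this]
    simpa using hD
  have hcont : Continuous (fun θ : ℝ => (1 : H →L[ℂ] H) - Complex.exp ((θ:ℂ) * c) • D) :=
    continuous_const.sub ((Complex.continuous_exp.comp (by continuity)).smul continuous_const)
  have h2 : ContinuousAt Ring.inverse ((1 : H →L[ℂ] H) - Complex.exp ((θ:ℂ) * c) • D) :=
    NormedRing.inverse_continuousAt (Units.oneSub _ hu)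
  exact ContinuousAt.comp (g := Ring.inverse)
    (f := fun θ : ℝ => (1 : H →L[ℂ] H) - Complex.exp ((θ:ℂ) * c) • D) h2 hcont.continuousAt

set_option maxHeartbeats 1000000 in
open MeasureTheory intervalIntegral in
theorem stmt_10 {H : Type*} [NormedAddCommGroup H] [InnerProductSpace ℂ H] [CompleteSpace H]
    (A : H →L[ℂ] H) (R : ℝ) (hR : 0 < R) (hA : ‖A‖ < R) (r : ℝ) (hr : r = 1 / R) :
    ∫ θ in (0 : ℝ)..(2 * Real.pi), muOp r θ A = (1 : H →L[ℂ] H) := by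
  have hrpos : 0 < r := by rw [hr]; positivity
  set D1 : H →L[ℂ] H := (r:ℂ) • A with hD1def
  set D2 : H →L[ℂ] H := (r:ℂ) • ContinuousLinearMap.adjoint A with hD2def
  have hnorm_smul : ∀ B : H →L[ℂ] H, ‖B‖ < R → ‖(r:ℂ) • B‖ < 1 := by
    intro B hB
    rw [norm_smul, Complex.norm_real, Real.norm_of_nonneg hrpos.le, hr]
    rw [div_mul_eq_mul_div, one_mul, div_lt_one hR]
    exact hB
  have hD1 : ‖D1‖ < 1 := hnorm_smul A hA
  have hD2 : ‖D2‖ < 1 := by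
    apply hnorm_smul
    rw [show ‖ContinuousLinearMap.adjoint A‖ = ‖A‖ from LinearIsometryEquiv.norm_map _ A]
    exact hA
  have hnB : ∀ θ : ℝ, ‖Complex.exp (-(θ:ℂ) * Complex.I) • D1‖ < 1 := by
    intro θ
    rw [norm_smul, Complex.norm_exp]
    simpa using hD1
  have hnC : ∀ θ : ℝ, ‖Complex.exp ((θ:ℂ) * Complex.I) • D2‖ < 1 := by
    intro θ
    rw [norm_smul, Complex.norm_exp]
    simpa using hD2
  set f : ℝ → (H →L[ℂ] H) :=
    fun θ => Ring.inverse (1 - Complex.exp (-(θ:ℂ) * Complex.I) • D1) with hfdef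
  set g : ℝ → (H →L[ℂ] H) :=
    fun θ => Ring.inverse (1 - Complex.exp ((θ:ℂ) * Complex.I) • D2) with hgdef
  have hmu : ∀ θ : ℝ, muOp r θ A
      = (((4 * Real.pi : ℝ) : ℂ))⁻¹ • (f θ + f θ - 1 + (g θ + g θ - 1)) := by
    intro θ
    rw [muOp, hfdef, hgdef, ← hD1def, ← hD2def,
      stmt10_aux_mul_inv _ (hnB θ), stmt10_aux_mul_inv _ (hnC θ)]
  have hfc : Continuous f := by
    have := stmt10_aux_cont D1 hD1 (-Complex.I) (by simp)
    convert this using 3 with θ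
    ring_nf
  have hgc : Continuous g := stmt10_aux_cont D2 hD2 Complex.I (by simp)
  have hfi : IntervalIntegrable f volume 0 (2*Real.pi) := hfc.intervalIntegrable _ _
  have hgi : IntervalIntegrable g volume 0 (2*Real.pi) := hgc.intervalIntegrable _ _
  have honei : IntervalIntegrable (fun _ : ℝ => (1 : H →L[ℂ] H)) volume 0 (2*Real.pi) :=
    intervalIntegrable_const
  have hIf : ∫ θ in (0:ℝ)..(2*Real.pi), f θ = (2*Real.pi : ℝ) • (1 : H →L[ℂ] H) :=
    stmt10_aux_key D1 hD1
  have hIg : ∫ θ in (0:ℝ)..(2*Real.pi), g θ = (2*Real.pi : ℝ) • (1 : H →L[ℂ] H) := by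
    have hsub := intervalIntegral.integral_comp_sub_left (a := (0:ℝ)) (b := 2*Real.pi)
      g (2*Real.pi)
    rw [sub_self, sub_zero] at hsub
    rw [← hsub]
    have heq : ∀ θ : ℝ, g (2*Real.pi - θ)
        = Ring.inverse (1 - Complex.exp (-(θ:ℂ) * Complex.I) • D2) := by
      intro θ
      have h1 : ((2*Real.pi - θ : ℝ) : ℂ) * Complex.I
          = 2*(Real.pi:ℂ)*Complex.I + (-(θ:ℂ) * Complex.I) := by
        push_cast; ring
      have h2 : Complex.exp (((2*Real.pi - θ : ℝ) : ℂ) * Complex.I)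
          = Complex.exp (-(θ:ℂ) * Complex.I) := by
        rw [h1, Complex.exp_add, Complex.exp_two_pi_mul_I, one_mul]
      simp only [hgdef]
      rw [h2]
    rw [intervalIntegral.integral_congr (fun θ _ => heq θ)]
    exact stmt10_aux_key D2 hD2
  have hIone : ∫ _ in (0:ℝ)..(2*Real.pi), (1 : H →L[ℂ] H)
      = (2*Real.pi : ℝ) • (1 : H →L[ℂ] H) := by
    rw [intervalIntegral.integral_const, sub_zero]
  have hsplit : ∫ θ in (0:ℝ)..(2*Real.pi), (f θ + f θ - 1 + (g θ + g θ - 1))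
      = ((2*Real.pi : ℝ) • (1 : H →L[ℂ] H)) + ((2*Real.pi : ℝ) • (1 : H →L[ℂ] H)) := by
    rw [intervalIntegral.integral_add ((hfi.add hfi).sub honei) ((hgi.add hgi).sub honei),
      intervalIntegral.integral_sub (hfi.add hfi) honei,
      intervalIntegral.integral_sub (hgi.add hgi) honei,
      intervalIntegral.integral_add hfi hfi, intervalIntegral.integral_add hgi hgi,
      hIf, hIg, hIone]
    abel
  calc ∫ θ in (0:ℝ)..(2*Real.pi), muOp r θ A
      = ∫ θ in (0:ℝ)..(2*Real.pi),
          (((4 * Real.pi : ℝ) : ℂ))⁻¹ • (f θ + f θ - 1 + (g θ + g θ - 1)) := by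
        exact intervalIntegral.integral_congr (fun θ _ => hmu θ)
    _ = (((4 * Real.pi : ℝ) : ℂ))⁻¹ •
          ∫ θ in (0:ℝ)..(2*Real.pi), (f θ + f θ - 1 + (g θ + g θ - 1)) := by
        rw [intervalIntegral.integral_smul]
    _ = 1 := by
        rw [hsplit]
        have h4 : ((2*Real.pi : ℝ) • (1 : H →L[ℂ] H)) + ((2*Real.pi : ℝ) • (1 : H →L[ℂ] H))
            = (((4 * Real.pi : ℝ) : ℂ)) • (1 : H →L[ℂ] H) := by
          rw [← add_smul]
          rw [show (2*Real.pi + 2*Real.pi : ℝ) = 4*Real.pi by ring]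
          rw [← algebraMap_smul ℂ (4*Real.pi : ℝ) (1 : H →L[ℂ] H), Complex.coe_algebraMap]
        rw [h4, smul_smul, inv_mul_cancel₀, one_smul]
        simp [Real.pi_ne_zero]
end

section
/- Let R > 1 and r = 1/R, and let G be a self-adjoint bounded operator on a complex Hilbert space with r·I ≤ G ≤ R·I. Then ‖G⁻¹ + G − ((R + r + 2)/2)·I‖ ≤ (R + r − 2)/2. -/
theorem stmt_16 {H : Type*} [NormedAddCommGroup H] [InnerProductSpace ℂ H] [CompleteSpace H]
    (R : ℝ) (hR : 1 < R) (r : ℝ) (hr : r = 1 / R)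
    (G : H →L[ℂ] H) (hG : IsSelfAdjoint G)
    (hGl : (G - (r : ℂ) • (1 : H →L[ℂ] H)).IsPositive)
    (hGu : ((R : ℂ) • (1 : H →L[ℂ] H) - G).IsPositive) :
    ‖Ring.inverse G + G - (((R + r + 2) / 2 : ℝ) : ℂ) • (1 : H →L[ℂ] H)‖ ≤
      (R + r - 2) / 2 := by
  have hR0 : (0:ℝ) < R := lt_trans one_pos hR
  have hr0 : (0:ℝ) < r := by rw [hr]; positivity
  have hRr : R * r = 1 := by rw [hr]; field_simp
  have hsmul : ∀ c : ℝ, (c : ℂ) • (1 : H →L[ℂ] H) = algebraMap ℝ (H →L[ℂ] H) c := by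
    intro c
    rw [Algebra.algebraMap_eq_smul_one, Complex.coe_smul]
  have hl : algebraMap ℝ (H →L[ℂ] H) r ≤ G := by
    rw [ContinuousLinearMap.le_def, ← hsmul]
    exact hGl
  have hu : G ≤ algebraMap ℝ (H →L[ℂ] H) R := by
    rw [ContinuousLinearMap.le_def, ← hsmul]
    exact hGu
  have hspec : ∀ x ∈ spectrum ℝ G, r ≤ x ∧ x ≤ R := by
    intro x hx
    exact ⟨(algebraMap_le_iff_le_spectrum hG).mp hl x hx,
      (le_algebraMap_iff_spectrum_le hG).mp hu x hx⟩
  have h0 : (0:ℝ) ∉ spectrum ℝ G := by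
    intro h
    have := (hspec 0 h).1
    linarith
  have hU : IsUnit G := spectrum.isUnit_of_zero_notMem ℝ h0
  have hcont : ContinuousOn (fun x : ℝ => x⁻¹) (spectrum ℝ G) :=
    ContinuousOn.inv₀ continuousOn_id fun x hx =>
      ne_of_gt (lt_of_lt_of_le hr0 (hspec x hx).1)
  have hinv : Ring.inverse G = cfc (fun x : ℝ => x⁻¹) G := by
    rw [← hU.unit_spec, Ring.inverse_unit]
    exact (cfc_inv_id (R := ℝ) hU.unit).symm
  set c : ℝ := (R + r + 2) / 2 with hc
  have key : Ring.inverse G + G - ((c : ℂ)) • (1 : H →L[ℂ] H)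
      = cfc (fun x : ℝ => x⁻¹ + x - c) G := by
    rw [hinv, hsmul, cfc_sub (fun x : ℝ => x⁻¹ + x) (fun _ : ℝ => c) G
      (hcont.add (continuousOn_id)) (continuousOn_const),
      cfc_add (a := G) (fun x : ℝ => x⁻¹) (fun x : ℝ => x) hcont continuousOn_id,
      cfc_id' ℝ G, cfc_const c G]
  rw [key]
  apply norm_cfc_le
  · nlinarith [sq_nonneg (R - 1)]
  · intro x hx
    obtain ⟨hxl, hxu⟩ := hspec x hx
    have hx0 : 0 < x := lt_of_lt_of_le hr0 hxl
    have h1 : x * x⁻¹ = 1 := mul_inv_cancel₀ (ne_of_gt hx0)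
    rw [Real.norm_eq_abs, abs_le]
    constructor
    · have h2 : 2 ≤ x⁻¹ + x := by nlinarith [sq_nonneg (x - 1)]
      simp only [hc]; linarith
    · have h3 : x⁻¹ + x ≤ R + r := by
        nlinarith [mul_nonneg (sub_nonneg.2 hxu) (sub_nonneg.2 hxl)]
      simp only [hc]; linarith
end
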